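/- Let r ≥ 3 be an odd integer and A ∈ ℂ a primitive 2r-th root of unity. If (i,j,k) ∈ I_r³ is an admissible triple, then (i′,j′,k) is also an admissible triple, and |i′,j′,k| = |i,j,k|, where for an admissible triple |a,b,c| = (−1)^{(a+b+c)/2} · [ (a+b−c)/2 ]! · [ (b+c−a)/2 ]! · [ (c+a−b)/2 ]! / [ (a+b+c)/2 + 1 ]! (all quantum factorials appearing here are nonzero, so both sides are well-defined complex numbers). -/

import Mathlib

/-- The quantum integer `[n] = (A^{2n} − A^{−2n})/(A² − A^{−2})`. -/
noncomputable def qint (A : ℂ) (n : ℤ) : ℂ :=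
  (A^(2*n) - A^(-(2*n))) / (A^(2:ℤ) - A^(-2:ℤ))

/-- The quantum factorial `[n]! = ∏_{k=1}^{n} [k]`, with `[0]! = 1`. -/
noncomputable def qfact (A : ℂ) (n : ℕ) : ℂ := ∏ k ∈ Finset.Icc 1 n, qint A k

/-- A triple `(i,j,k) ∈ I_r³` is admissible if `i+j ≥ k`, `j+k ≥ i`, `k+i ≥ j`,
`i+j+k` is even and `i+j+k ≤ 2(r−2)`. -/
def triAdm (r i j k : ℕ) : Prop :=
  k ≤ i + j ∧ i ≤ j + k ∧ j ≤ k + i ∧ Even (i + j + k) ∧ i + j + k ≤ 2*(r-2)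

/-- The trihedral coefficient of an admissible triple:
`|i,j,k| = (−1)^{(i+j+k)/2} [ (i+j−k)/2 ]! [ (j+k−i)/2 ]! [ (k+i−j)/2 ]! / [ (i+j+k)/2 + 1 ]!`. -/
noncomputable def trip (A : ℂ) (i j k : ℕ) : ℂ :=
  (-1:ℂ)^((i+j+k)/2) * qfact A ((i+j-k)/2) * qfact A ((j+k-i)/2) * qfact A ((k+i-j)/2)
    / qfact A ((i+j+k)/2 + 1)

lemma qden_ne (r : ℕ) (hr : 3 ≤ r) (A : ℂ) (hA : IsPrimitiveRoot A (2*r)) :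
    A^(2:ℤ) - A^(-2:ℤ) ≠ 0 := by
  have hA0 : A ≠ 0 := hA.ne_zero (by omega)
  intro hcon
  have h2 : A^(2:ℤ) = A^(-2:ℤ) := sub_eq_zero.mp hcon
  have h4 : A^(4:ℤ) = 1 := by
    calc A^(4:ℤ) = A^(2:ℤ) * A^(2:ℤ) := by rw [← zpow_add₀ hA0]; norm_num
    _ = A^(2:ℤ) * A^(-2:ℤ) := by rw [h2]
    _ = 1 := by rw [← zpow_add₀ hA0]; norm_num
  have hd := (hA.zpow_eq_one_iff_dvd 4).mp h4
  have : ((2*r:ℕ):ℤ) ≤ 4 := Int.le_of_dvd (by norm_num) hd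
  push_cast at this; omega

lemma qint_ne (r : ℕ) (hodd : Odd r) (hr : 3 ≤ r) (A : ℂ) (hA : IsPrimitiveRoot A (2*r))
    (n : ℕ) (h1 : 1 ≤ n) (h2 : n ≤ r - 1) : qint A n ≠ 0 := by
  have hA0 : A ≠ 0 := hA.ne_zero (by omega)
  have hden := qden_ne r hr A hA
  rw [qint, div_ne_zero_iff]
  refine ⟨?_, hden⟩
  intro hcon
  have hnum : A^(2*(n:ℤ)) = A^(-(2*(n:ℤ))) := sub_eq_zero.mp hcon
  have h4 : A^(4*(n:ℤ)) = 1 := by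
    calc A^(4*(n:ℤ)) = A^(2*(n:ℤ)) * A^(2*(n:ℤ)) := by rw [← zpow_add₀ hA0]; ring_nf
    _ = A^(2*(n:ℤ)) * A^(-(2*(n:ℤ))) := by rw [hnum]
    _ = 1 := by rw [← zpow_add₀ hA0]; ring_nf; simp
  have hd := (hA.zpow_eq_one_iff_dvd _).mp h4
  -- (2r : ℤ) ∣ 4n  ⇒ r ∣ 2n ⇒ r ∣ n (r odd) ⇒ contradiction
  have hd2 : (r:ℤ) ∣ 2*(n:ℤ) := by
    obtain ⟨c, hc⟩ := hd
    refine ⟨c, ?_⟩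
    push_cast at hc
    linarith
  have hd3 : (r:ℕ) ∣ 2*n := by exact_mod_cast hd2
  have hd4 : r ∣ n := (Nat.Coprime.dvd_of_dvd_mul_left (by
    simpa [Nat.coprime_two_left] using hodd) hd3)
  have := Nat.le_of_dvd (by omega) hd4
  omega

lemma qfact_ne (r : ℕ) (hodd : Odd r) (hr : 3 ≤ r) (A : ℂ) (hA : IsPrimitiveRoot A (2*r))
    (n : ℕ) (h2 : n ≤ r - 1) : qfact A n ≠ 0 := by
  rw [qfact, Finset.prod_ne_zero_iff]
  intro t ht
  simp only [Finset.mem_Icc] at ht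
  exact qint_ne r hodd hr A hA t ht.1 (le_trans ht.2 h2)

lemma qfact_succ (A : ℂ) (n : ℕ) : qfact A (n+1) = qfact A n * qint A (n+1) := by
  rw [qfact, qfact, Finset.prod_Icc_succ_top (by omega : 1 ≤ n+1)]
  norm_cast

lemma qint_flip (r : ℕ) (hr : 3 ≤ r) (A : ℂ) (hA : IsPrimitiveRoot A (2*r))
    (n : ℤ) : qint A ((r:ℤ) - n) = - qint A n := by
  have hA0 : A ≠ 0 := hA.ne_zero (by omega)
  have h2r : A^((2*r:ℕ):ℤ) = 1 := by
    rw [zpow_natCast]; exact hA.pow_eq_one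
  have key : ∀ m : ℤ, A^(2*((r:ℤ) - m)) = A^(-(2*m)) := by
    intro m
    have : 2*((r:ℤ) - m) = ((2*r:ℕ):ℤ) + (-(2*m)) := by push_cast; ring
    rw [this, zpow_add₀ hA0, h2r, one_mul]
  have key2 : A^(-(2*((r:ℤ) - n))) = A^(2*n) := by
    have : -(2*((r:ℤ) - n)) = (-((2*r:ℕ):ℤ)) + 2*n := by push_cast; ring
    rw [this, zpow_add₀ hA0, zpow_neg, h2r, inv_one, one_mul]
  rw [qint, qint, key, key2]
  ring

lemma key0 (r : ℕ) (hr : 3 ≤ r) (A : ℂ) (hA : IsPrimitiveRoot A (2*r))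
    (a : ℕ) (ha : a ≤ r - 2) :
    qfact A (r-2-a+1) * qfact A a = -(qfact A (r-2-a) * qfact A (a+1)) := by
  rw [qfact_succ, qfact_succ]
  have hflip : qint A (((r-2-a : ℕ) : ℤ) + 1) = - qint A (((a:ℕ):ℤ) + 1) := by
    have h1 : ((r-2-a : ℕ) : ℤ) + 1 = (r:ℤ) - (((a:ℕ):ℤ) + 1) := by omega
    rw [h1, qint_flip r hr A hA]
  rw [hflip]; ring

lemma keyI (r : ℕ) (hr : 3 ≤ r) (A : ℂ) (hA : IsPrimitiveRoot A (2*r))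
    (d : ℕ) : ∀ a : ℕ, a + d ≤ r - 2 →
    qfact A (r-2-a+1) * qfact A a
      = (-1:ℂ)^(d+1) * (qfact A (r-2-(a+d)) * qfact A (a+d+1)) := by
  induction d with
  | zero =>
    intro a ha
    simpa using key0 r hr A hA a (by omega)
  | succ d ih =>
    intro a ha
    rw [ih a (by omega)]
    have h1 : r-2-(a+d) = r-2-(a+d+1)+1 := by omega
    rw [h1, key0 r hr A hA (a+d+1) (by omega)]
    have h2 : a+(d+1) = a+d+1 := by omega
    rw [h2]
    ring

lemma negpow (x y : ℕ) (h : x % 2 = y % 2) : (-1:ℂ)^x = (-1:ℂ)^y := by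
  rcases Nat.even_or_odd x with hx | hx
  · have hx2 := Nat.even_iff.mp hx
    rw [hx.neg_one_pow, (Nat.even_iff.mpr (by omega : y % 2 = 0)).neg_one_pow]
  · have hx2 := Nat.odd_iff.mp hx
    rw [hx.neg_one_pow, (Nat.odd_iff.mpr (by omega : y % 2 = 1)).neg_one_pow]


/-- For `r ≥ 3` odd and `A` a primitive `2r`-th root of unity: if `(i,j,k) ∈ I_r³` is
admissible then so is `(i′,j′,k)`, where `i′ = r−2−i`, and `|i′,j′,k| = |i,j,k|`. -/
theorem stmt15 (r : ℕ) (hodd : Odd r) (hr : 3 ≤ r) (A : ℂ)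
    (hA : IsPrimitiveRoot A (2*r)) (i j k : ℕ)
    (hi : i ≤ r - 2) (hj : j ≤ r - 2) (hk : k ≤ r - 2)
    (h : triAdm r i j k) :
    triAdm r (r-2-i) (r-2-j) k ∧ trip A (r-2-i) (r-2-j) k = trip A i j k := by
  obtain ⟨h1, h2, h3, h4, h5⟩ := h
  obtain ⟨s, hs⟩ := h4
  set m := r - 2 with hm
  have hsm : s ≤ m := by omega
  have hks : k ≤ s := by omega
  have his : i ≤ s := by omega
  have hjs : j ≤ s := by omega
  constructor
  · exact ⟨by omega, by omega, by omega, ⟨m - s + k, by omega⟩, by omega⟩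
  · rw [trip, trip]
    have e1 : (i+j+k)/2 = s := by omega
    have e2 : (i+j-k)/2 = s - k := by omega
    have e3 : (j+k-i)/2 = s - i := by omega
    have e4 : (k+i-j)/2 = s - j := by omega
    have f1 : ((m-i)+(m-j)+k)/2 = m - s + k := by omega
    have f2 : ((m-i)+(m-j)-k)/2 = m - s := by omega
    have f3 : ((m-j)+k-(m-i))/2 = s - j := by omega
    have f4 : (k+(m-i)-(m-j))/2 = s - i := by omega
    rw [e1, e2, e3, e4, f1, f2, f3, f4]
    have hden1 : qfact A (m - s + k + 1) ≠ 0 :=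
      qfact_ne r hodd hr A hA _ (by omega)
    have hden2 : qfact A (s + 1) ≠ 0 :=
      qfact_ne r hodd hr A hA _ (by omega)
    rw [div_eq_div_iff hden1 hden2]
    have hK := keyI r hr A hA k (s-k) (by omega)
    have h6 : s - k + k = s := by omega
    rw [h6] at hK
    have h7 : m - s + k + 1 = m - (s-k) + 1 := by omega
    rw [h7]
    have hsgn : (-1:ℂ)^(m - s + k) = (-1:ℂ)^(s + k + 1) := by
      apply negpow
      obtain ⟨t, ht⟩ := hodd
      omega
    rw [hsgn]
    linear_combination (-(-1:ℂ)^s * qfact A (s-i) * qfact A (s-j)) * hK
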